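/- arXiv:1011.6140 — 2 statements merged into one kernel-verified Lean document; each statement's English description precedes it below -/
import Mathlib

section
/- The dyadic twisted paraproduct does not map L^∞(R^2) × L^∞(R^2) to L^∞(R^2): there is no constant C such that ‖T_d(F,G)‖_{L^∞} ≤ C ‖F‖_{L^∞} ‖G‖_{L^∞} for all bounded compactly supported F, G. Specifically, for each positive integer n, taking F := 1 on the set (∪_{j=0}^{n-1} [2^{-2j-1}, 2^{-2j})) × [0,1) and 0 elsewhere, and G(x,y) := F(y,x), one has |T_d(F,G)(x,y)| ≳ n for (x,y) ∈ [0, 2^{-2n})^2, while ‖F‖_{L^∞} = ‖G‖_{L^∞} = 1. -/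
open MeasureTheory Set
open scoped Classical

noncomputable section

/-- The dyadic interval `[2^k l, 2^k (l+1))`. -/
def dIco (k l : ℤ) : Set ℝ := Set.Ico ((2:ℝ)^k * l) ((2:ℝ)^k * (l+1))

/-- The Haar scaling function `φ_I = |I|^{-1/2} 1_I` of the dyadic interval `I = [2^k l, 2^k(l+1))`. -/
def haarPhi (k l : ℤ) (x : ℝ) : ℝ :=
  if x ∈ dIco k l then (Real.sqrt ((2:ℝ)^k))⁻¹ else 0

/-- The Haar wavelet `ψ_I = |I|^{-1/2} (1_{I_left} - 1_{I_right})`. -/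
def haarPsi (k l : ℤ) (x : ℝ) : ℝ :=
  if x ∈ dIco (k-1) (2*l) then (Real.sqrt ((2:ℝ)^k))⁻¹
  else if x ∈ dIco (k-1) (2*l+1) then -(Real.sqrt ((2:ℝ)^k))⁻¹ else 0

/-- The dyadic martingale average `E_k f` at scale `2^{-k}`:
`(E_k f)(x) = (1/|I|) ∫_I f` where `I ∋ x` is the dyadic interval of length `2^{-k}`. -/
def Ek (k : ℤ) (f : ℝ → ℝ) (x : ℝ) : ℝ :=
  (2:ℝ)^k * ∫ t in dIco (-k) ⌊(2:ℝ)^k * x⌋, f t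

/-- `E_k` acting in the first variable of a function on `ℝ²`. -/
def Ek1 (k : ℤ) (F : ℝ × ℝ → ℝ) (p : ℝ × ℝ) : ℝ := Ek k (fun u => F (u, p.2)) p.1

/-- `E_k` acting in the second variable of a function on `ℝ²`. -/
def Ek2 (k : ℤ) (F : ℝ × ℝ → ℝ) (p : ℝ × ℝ) : ℝ := Ek k (fun v => F (p.1, v)) p.2

/-- The martingale difference `Δ_k = E_{k+1} − E_k` in the first variable. -/
def Dk1 (k : ℤ) (F : ℝ × ℝ → ℝ) (p : ℝ × ℝ) : ℝ := Ek1 (k+1) F p - Ek1 k F p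

/-- The martingale difference `Δ_k = E_{k+1} − E_k` in the second variable. -/
def Dk2 (k : ℤ) (F : ℝ × ℝ → ℝ) (p : ℝ × ℝ) : ℝ := Ek2 (k+1) F p - Ek2 k F p

/-- The dyadic twisted paraproduct `T_d(F,G) = Σ_k (E_k^{(1)}F)(Δ_k^{(2)}G)`. -/
def Td (F G : ℝ × ℝ → ℝ) (p : ℝ × ℝ) : ℝ := ∑' k : ℤ, Ek1 k F p * Dk2 k G p

/-- The counterexample function: the indicator of `(∪_{j<n} [2^{-2j-1}, 2^{-2j})) × [0,1)`. -/
def F14 (n : ℕ) (p : ℝ × ℝ) : ℝ :=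
  if (∃ j < n, p.1 ∈ Set.Ico ((2:ℝ)^(-(2*(j:ℤ))-1)) ((2:ℝ)^(-(2*(j:ℤ))))) ∧
      p.2 ∈ Set.Ico (0:ℝ) 1 then 1 else 0

/-- Its reflection `G(x,y) = F(y,x)`. -/
def G14 (n : ℕ) (p : ℝ × ℝ) : ℝ := F14 n (p.2, p.1)

-- === auxiliary development ===

def piece (j : ℕ) : Set ℝ := Set.Ico ((2:ℝ)^(-(2*(j:ℤ))-1)) ((2:ℝ)^(-(2*(j:ℤ))))

def sA (n : ℕ) (k : ℤ) : ℝ :=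
  ∑ j ∈ Finset.range n, if k ≤ 2*(j:ℤ) then (2:ℝ)^(-(2*(j:ℤ))-1) else 0

def aa (n : ℕ) (k : ℤ) : ℝ := (2:ℝ)^k * sA n k

lemma two_zpow_pos (k : ℤ) : (0:ℝ) < 2 ^ k := zpow_pos (by norm_num) k

lemma two_zpow_le {a b : ℤ} (h : a ≤ b) : (2:ℝ)^a ≤ 2^b :=
  zpow_le_zpow_right₀ one_le_two h

lemma piece_not_mem {j j' : ℕ} (h : j ≠ j') {t : ℝ} (ht : t ∈ piece j) : t ∉ piece j' := by
  intro ht'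
  rcases lt_or_gt_of_ne h with hlt | hlt
  · have h1 : (2:ℝ)^(-(2*(j':ℤ))) ≤ (2:ℝ)^(-(2*(j:ℤ))-1) := two_zpow_le (by omega)
    exact absurd ht'.2 (not_lt.mpr (le_trans h1 ht.1))
  · have h1 : (2:ℝ)^(-(2*(j:ℤ))) ≤ (2:ℝ)^(-(2*(j':ℤ))-1) := two_zpow_le (by omega)
    exact absurd ht.2 (not_lt.mpr (le_trans h1 ht'.1))

lemma F14_eq_sum (n : ℕ) {y : ℝ} (hy : y ∈ Set.Ico (0:ℝ) 1) (t : ℝ) :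
    F14 n (t, y) = ∑ j ∈ Finset.range n, (piece j).indicator (fun _ => (1:ℝ)) t := by
  by_cases h : ∃ j < n, t ∈ piece j
  · obtain ⟨j, hj, ht⟩ := h
    rw [F14, if_pos ⟨⟨j, hj, ht⟩, hy⟩]
    rw [Finset.sum_eq_single_of_mem j (Finset.mem_range.mpr hj)]
    · simp [Set.indicator_of_mem ht]
    · intro b _ hb
      exact Set.indicator_of_notMem (piece_not_mem (Ne.symm hb) ht) _
  · rw [F14, if_neg]
    · rw [Finset.sum_eq_zero]
      intro j hj
      exact Set.indicator_of_notMem (fun ht => h ⟨j, Finset.mem_range.mp hj, ht⟩) _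
    · rintro ⟨⟨j, hj, ht⟩, -⟩; exact h ⟨j, hj, ht⟩

lemma dIco_neg_zero (k : ℤ) : dIco (-k) 0 = Set.Ico (0:ℝ) (2^(-k)) := by
  simp [dIco]

lemma integral_piece (k : ℤ) (j : ℕ) :
    ∫ t in Set.Ico (0:ℝ) (2^(-k)), (piece j).indicator (fun _ => (1:ℝ)) t
      = if k ≤ 2*(j:ℤ) then (2:ℝ)^(-(2*(j:ℤ))-1) else 0 := by
  simp only [piece]
  rw [MeasureTheory.setIntegral_indicator measurableSet_Ico, Set.Ico_inter_Ico,
    MeasureTheory.setIntegral_const, smul_eq_mul, mul_one, measureReal_def, Real.volume_Ico,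
    max_eq_right (two_zpow_pos (-(2*(j:ℤ))-1)).le]
  have hdouble : (2:ℝ)^(-(2*(j:ℤ))-1) * 2 = (2:ℝ)^(-(2*(j:ℤ))) := by
    rw [← zpow_add_one₀ (two_ne_zero : (2:ℝ) ≠ 0)]; norm_num
  by_cases h : k ≤ 2*(j:ℤ)
  · rw [if_pos h, min_eq_right (two_zpow_le (by omega))]
    rw [show (2:ℝ)^(-(2*(j:ℤ))) - (2:ℝ)^(-(2*(j:ℤ))-1) = (2:ℝ)^(-(2*(j:ℤ))-1) by linarith]
    exact ENNReal.toReal_ofReal (two_zpow_pos _).le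
  · rw [if_neg h]
    have hk : (2:ℝ)^(-k) ≤ (2:ℝ)^(-(2*(j:ℤ))-1) := two_zpow_le (by omega)
    rw [min_eq_left (le_trans hk (two_zpow_le (by omega))),
      ENNReal.ofReal_eq_zero.mpr (by linarith), ENNReal.toReal_zero]

lemma integral_F14 (n : ℕ) {y : ℝ} (hy : y ∈ Set.Ico (0:ℝ) 1) (k : ℤ) :
    ∫ t in dIco (-k) 0, F14 n (t, y) = sA n k := by
  rw [dIco_neg_zero]
  calc ∫ t in Set.Ico (0:ℝ) (2^(-k)), F14 n (t, y)
      = ∫ t in Set.Ico (0:ℝ) (2^(-k)),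
          ∑ j ∈ Finset.range n, (piece j).indicator (fun _ => (1:ℝ)) t :=
        MeasureTheory.setIntegral_congr_fun measurableSet_Ico (fun t _ => F14_eq_sum n hy t)
    _ = ∑ j ∈ Finset.range n,
          ∫ t in Set.Ico (0:ℝ) (2^(-k)), (piece j).indicator (fun _ => (1:ℝ)) t := by
        apply MeasureTheory.integral_finset_sum
        intro j _
        simp only [piece]
        rw [MeasureTheory.integrable_indicator_iff measurableSet_Ico]
        refine (MeasureTheory.integrableOn_const_iff (by simp)).mpr (Or.inr ?_)
        exact lt_of_le_of_lt (MeasureTheory.Measure.restrict_apply_le _ _) measure_Ico_lt_top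
    _ = sA n k := Finset.sum_congr rfl fun j _ => integral_piece k j

lemma aa_eq_zero {n : ℕ} {k : ℤ} (hk : 2*(n:ℤ) - 1 ≤ k) : aa n k = 0 := by
  have h : sA n k = 0 := Finset.sum_eq_zero fun j hj => by
    rw [if_neg]
    have := Finset.mem_range.mp hj
    omega
  rw [aa, h, mul_zero]

lemma sA_neg (n : ℕ) {k : ℤ} (hk : k ≤ 0) : sA n k = sA n 0 :=
  Finset.sum_congr rfl fun j _ => by rw [if_pos (by omega), if_pos (by omega)]

lemma sq_sub (n : ℕ) {x : ℝ} (hx : x ∈ Set.Ico (0:ℝ) (2^(-(2*(n:ℤ))))) :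
    x ∈ Set.Ico (0:ℝ) 1 := by
  refine ⟨hx.1, lt_of_lt_of_le hx.2 ?_⟩
  calc (2:ℝ)^(-(2*(n:ℤ))) ≤ 2^(0:ℤ) := two_zpow_le (by omega)
    _ = 1 := zpow_zero 2

lemma Ek1_eq (n : ℕ) (k : ℤ) {x y : ℝ}
    (hx : x ∈ Set.Ico (0:ℝ) (2^(-(2*(n:ℤ))))) (hy : y ∈ Set.Ico (0:ℝ) 1) :
    Ek1 k (F14 n) (x, y) = aa n k := by
  have hxlt : (2:ℝ)^k * x < 2^(k - 2*(n:ℤ)) := by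
    calc (2:ℝ)^k * x < 2^k * 2^(-(2*(n:ℤ))) := by
          exact mul_lt_mul_of_pos_left hx.2 (two_zpow_pos k)
      _ = 2^(k - 2*(n:ℤ)) := by
          rw [← zpow_add₀ (two_ne_zero : (2:ℝ) ≠ 0)]; ring_nf
  rcases le_or_gt k (2*(n:ℤ)) with hk | hk
  · have hfl : ⌊(2:ℝ)^k * x⌋ = 0 := by
      rw [Int.floor_eq_zero_iff]
      refine ⟨mul_nonneg (two_zpow_pos k).le hx.1, ?_⟩
      calc (2:ℝ)^k * x < 2^(k - 2*(n:ℤ)) := hxlt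
        _ ≤ 2^(0:ℤ) := two_zpow_le (by omega)
        _ = 1 := zpow_zero 2
    show (2:ℝ)^k * ∫ t in dIco (-k) ⌊(2:ℝ)^k * x⌋, F14 n (t, y) = aa n k
    rw [hfl, integral_F14 n hy k, aa]
  · rw [aa_eq_zero (by omega)]
    set l := ⌊(2:ℝ)^k * x⌋ with hl
    have hcast : (2:ℝ)^(k - 2*(n:ℤ)) = ((2^(k - 2*(n:ℤ)).toNat : ℤ) : ℝ) := by
      push_cast
      rw [← zpow_natCast]
      congr 1
      omega
    have hl1 : (l:ℝ) + 1 ≤ (2:ℝ)^(k - 2*(n:ℤ)) := by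
      rw [hcast]
      have h2 : ((l:ℝ)) < ((2^(k - 2*(n:ℤ)).toNat : ℤ) : ℝ) :=
        lt_of_le_of_lt (Int.floor_le _) (by rw [← hcast]; exact hxlt)
      have h3 : l < 2^(k - 2*(n:ℤ)).toNat := by exact_mod_cast h2
      exact_mod_cast h3
    have hzero : ∀ t ∈ dIco (-k) l, F14 n (t, y) = 0 := by
      intro t ht
      have htlt : t < (2:ℝ)^(-(2*(n:ℤ))) := by
        calc t < (2:ℝ)^(-k) * ((l:ℝ) + 1) := ht.2
          _ ≤ (2:ℝ)^(-k) * (2:ℝ)^(k - 2*(n:ℤ)) :=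
            mul_le_mul_of_nonneg_left hl1 (two_zpow_pos _).le
          _ = (2:ℝ)^(-(2*(n:ℤ))) := by
            rw [← zpow_add₀ (two_ne_zero : (2:ℝ) ≠ 0)]; ring_nf
      rw [F14, if_neg]
      rintro ⟨⟨j, hj, htj⟩, -⟩
      have hle : (2:ℝ)^(-(2*(n:ℤ))) ≤ (2:ℝ)^(-(2*(j:ℤ))-1) := two_zpow_le (by omega)
      exact absurd htj.1 (not_le.mpr (lt_of_lt_of_le htlt hle))
    show (2:ℝ)^k * ∫ t in dIco (-k) l, F14 n (t, y) = 0
    rw [MeasureTheory.setIntegral_congr_fun (show MeasurableSet (dIco (-k) l) from measurableSet_Ico) hzero]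
    simp

lemma Ek2_eq (n : ℕ) (k : ℤ) {x y : ℝ}
    (hy : y ∈ Set.Ico (0:ℝ) (2^(-(2*(n:ℤ))))) (hx : x ∈ Set.Ico (0:ℝ) 1) :
    Ek2 k (G14 n) (x, y) = aa n k := by
  have h : Ek2 k (G14 n) (x, y) = Ek1 k (F14 n) (y, x) := rfl
  rw [h, Ek1_eq n k hy hx]

/-- summand of the paraproduct for the counterexample -/
def ff (n : ℕ) (k : ℤ) : ℝ := aa n k * (aa n (k+1) - aa n k)

lemma zpow_neg_nat (m : ℕ) : (2:ℝ)^(-(m:ℤ)) = ((2:ℝ)^m)⁻¹ := by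
  rw [zpow_neg, zpow_natCast]

lemma ff_neg (n : ℕ) (m : ℕ) : ff n (-(m:ℤ)-1) = (sA n 0)^2/4 * (1/4)^m := by
  have e1 : aa n (-(m:ℤ)-1) = 2^(-(m:ℤ)-1) * sA n 0 := by
    rw [aa, sA_neg n (by omega : -(m:ℤ)-1 ≤ 0)]
  have e2 : aa n (-(m:ℤ)-1+1) = 2^(-(m:ℤ)) * sA n 0 := by
    rw [show -(m:ℤ)-1+1 = -(m:ℤ) by ring, aa, sA_neg n (by omega : -(m:ℤ) ≤ 0)]
  have h3 : (2:ℝ)^(-(m:ℤ)-1) = ((2:ℝ)^m)⁻¹/2 := by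
    rw [zpow_sub₀ (two_ne_zero : (2:ℝ) ≠ 0), zpow_neg_nat, zpow_one]
  have h4 : ((1:ℝ)/4)^m = (((2:ℝ)^m)^2)⁻¹ := by
    rw [div_pow, one_pow, show (4:ℝ) = 2^2 by norm_num, ← pow_mul, mul_comm 2 m, pow_mul, one_div]
  have hne : ((2:ℝ)^m) ≠ 0 := by positivity
  rw [ff, e1, e2, h3, zpow_neg_nat, h4]
  field_simp
  ring

lemma hasSum_ff (n : ℕ) (hn : 1 ≤ n) :
    HasSum (ff n) (∑ m ∈ Finset.range (2*n-1), ff n m + (sA n 0)^2/3) := by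
  apply HasSum.of_nat_of_neg_add_one
  · apply hasSum_sum_of_ne_finset_zero
    intro m hm
    have hm' : 2*n-1 ≤ m := by
      by_contra h
      exact hm (Finset.mem_range.mpr (by omega))
    have h0 : aa n (m:ℤ) = 0 := aa_eq_zero (by omega)
    rw [ff, h0, zero_mul]
  · have hg : HasSum (fun m:ℕ => (sA n 0)^2/4 * (1/4)^m) ((sA n 0)^2/4 * (1-1/4)⁻¹) :=
      (hasSum_geometric_of_lt_one (by norm_num) (by norm_num)).mul_left _
    have heq : (fun m:ℕ => ff n (-(m+1))) = fun m:ℕ => (sA n 0)^2/4 * (1/4)^m := by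
      funext m
      rw [show -((m:ℤ)+1) = -(m:ℤ)-1 by ring, ff_neg]
    rw [heq, show (sA n 0)^2/3 = (sA n 0)^2/4 * (1-1/4)⁻¹ by ring]
    exact hg

lemma Td_eq (n : ℕ) (hn : 1 ≤ n) {x y : ℝ}
    (hx : x ∈ Set.Ico (0:ℝ) (2^(-(2*(n:ℤ))))) (hy : y ∈ Set.Ico (0:ℝ) (2^(-(2*(n:ℤ))))) :
    Td (F14 n) (G14 n) (x, y) = ∑ m ∈ Finset.range (2*n-1), ff n m + (sA n 0)^2/3 := by
  rw [Td]
  have hterm : ∀ k : ℤ, Ek1 k (F14 n) (x, y) * Dk2 k (G14 n) (x, y) = ff n k := by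
    intro k
    rw [Dk2, Ek1_eq n k hx (sq_sub n hy), Ek2_eq n (k+1) hy (sq_sub n hx),
      Ek2_eq n k hy (sq_sub n hx), ff]
  rw [tsum_congr hterm]
  exact (hasSum_ff n hn).tsum_eq

lemma two_zpow_even (i : ℕ) : (2:ℝ)^(-(2*(i:ℤ))) = (1/4:ℝ)^i := by
  have h : -(2*(i:ℤ)) = -((2*i:ℕ):ℤ) := by push_cast; ring
  rw [h, zpow_neg_nat, pow_mul]
  norm_num
  simp [one_div, inv_pow]

lemma two_zpow_odd (j : ℕ) : (2:ℝ)^(-(2*(j:ℤ))-1) = (1/2)*(1/4:ℝ)^j := by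
  rw [zpow_sub₀ (two_ne_zero : (2:ℝ) ≠ 0), two_zpow_even, zpow_one]
  ring

lemma sA_bound (n i : ℕ) : sA n (2*(i:ℤ)+1) ≤ (2:ℝ)^(-(2*(i:ℤ)))/6 := by
  have hfil : sA n (2*(i:ℤ)+1) = ∑ j ∈ Finset.Ico (i+1) n, (2:ℝ)^(-(2*(j:ℤ))-1) := by
    rw [sA, ← Finset.sum_filter]
    apply Finset.sum_congr _ (fun _ _ => rfl)
    ext j
    simp only [Finset.mem_filter, Finset.mem_range, Finset.mem_Ico]
    omega
  rw [hfil, two_zpow_even,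
    Finset.sum_congr rfl (fun j _ => two_zpow_odd j), ← Finset.mul_sum]
  rcases le_or_gt (i+1) n with h | h
  · rw [geom_sum_Ico (by norm_num : (1/4:ℝ) ≠ 1) h]
    have h4 : (0:ℝ) ≤ (1/4:ℝ)^n := by positivity
    have h5 : ((1/4:ℝ)^n - (1/4)^(i+1))/(1/4-1) = ((1/4:ℝ)^(i+1) - (1/4)^n)/(3/4) := by
      ring
    rw [h5, pow_succ]
    linarith
  · rw [Finset.Ico_eq_empty (by omega), Finset.sum_empty, mul_zero]
    positivity

lemma jump_le (n i : ℕ) (hi : i < n) :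
    aa n (2*(i:ℤ)+1) - aa n (2*(i:ℤ)) ≤ -(1/3) := by
  have hsplit : sA n (2*(i:ℤ)) = sA n (2*(i:ℤ)+1) + (2:ℝ)^(-(2*(i:ℤ))-1) := by
    rw [sA, sA]
    have h : ∀ j ∈ Finset.range n,
        (if 2*(i:ℤ) ≤ 2*(j:ℤ) then (2:ℝ)^(-(2*(j:ℤ))-1) else 0)
          = (if 2*(i:ℤ)+1 ≤ 2*(j:ℤ) then (2:ℝ)^(-(2*(j:ℤ))-1) else 0)
            + (if j = i then (2:ℝ)^(-(2*(i:ℤ))-1) else 0) := by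
      intro j _
      rcases lt_trichotomy j i with h|h|h
      · rw [if_neg (by omega), if_neg (by omega), if_neg (by omega)]; ring
      · subst h
        rw [if_pos (by omega), if_neg (by omega), if_pos rfl]; ring
      · rw [if_pos (by omega), if_pos (by omega), if_neg (by omega)]; ring
    rw [Finset.sum_congr rfl h, Finset.sum_add_distrib,
      Finset.sum_ite_eq' (Finset.range n) i, if_pos (Finset.mem_range.mpr hi)]
  have hb := sA_bound n i
  have hpos := two_zpow_pos (2*(i:ℤ))
  have e1 : aa n (2*(i:ℤ)+1) = 2^(2*(i:ℤ)) * 2 * sA n (2*(i:ℤ)+1) := by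
    rw [aa, zpow_add₀ (two_ne_zero : (2:ℝ)≠0), zpow_one]
  have e2 : aa n (2*(i:ℤ)) = 2^(2*(i:ℤ)) * sA n (2*(i:ℤ)+1)
      + 2^(2*(i:ℤ)) * (2:ℝ)^(-(2*(i:ℤ))-1) := by
    rw [aa, hsplit]; ring
  have e3 : (2:ℝ)^(2*(i:ℤ)) * (2:ℝ)^(-(2*(i:ℤ))-1) = 1/2 := by
    rw [← zpow_add₀ (two_ne_zero : (2:ℝ)≠0),
      show (2*(i:ℤ)) + (-(2*(i:ℤ))-1) = -1 by ring]
    norm_num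
  have e5 : (2:ℝ)^(2*(i:ℤ)) * (2:ℝ)^(-(2*(i:ℤ))) = 1 := by
    rw [← zpow_add₀ (two_ne_zero : (2:ℝ)≠0), show (2*(i:ℤ)) + (-(2*(i:ℤ))) = 0 by ring]
    norm_num
  have h5 : 2^(2*(i:ℤ)) * sA n (2*(i:ℤ)+1) ≤ 1/6 := by
    calc (2:ℝ)^(2*(i:ℤ)) * sA n (2*(i:ℤ)+1) ≤ 2^(2*(i:ℤ)) * ((2:ℝ)^(-(2*(i:ℤ)))/6) :=
          mul_le_mul_of_nonneg_left hb hpos.le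
      _ = 1/6 := by rw [div_eq_mul_inv, ← mul_assoc, e5, one_mul]; norm_num
  rw [e1, e2, e3]
  nlinarith [h5]

lemma Td_le (n : ℕ) (hn : 1 ≤ n) {x y : ℝ}
    (hx : x ∈ Set.Ico (0:ℝ) (2^(-(2*(n:ℤ))))) (hy : y ∈ Set.Ico (0:ℝ) (2^(-(2*(n:ℤ))))) :
    Td (F14 n) (G14 n) (x, y) ≤ -((n:ℝ)/18) := by
  rw [Td_eq n hn hx hy]
  have hsum : ∑ m ∈ Finset.range (2*n-1), ff n m
      = (aa n ((2*n-1:ℕ):ℤ)^2/2 - aa n ((0:ℕ):ℤ)^2/2)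
        - ∑ m ∈ Finset.range (2*n-1), (aa n ((m:ℤ)+1) - aa n (m:ℤ))^2/2 := by
    rw [Finset.sum_congr rfl (fun (m : ℕ) (_ : m ∈ Finset.range (2*n-1)) => show ff n (m:ℤ)
        = (aa n ((m:ℤ)+1)^2/2 - aa n (m:ℤ)^2/2) - (aa n ((m:ℤ)+1) - aa n (m:ℤ))^2/2
        from by rw [ff]; ring), Finset.sum_sub_distrib]
    congr 1
    rw [← Finset.sum_range_sub (fun m : ℕ => aa n (m:ℤ)^2/2) (2*n-1)]
    apply Finset.sum_congr rfl
    intro m _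
    norm_cast
  have hend : aa n ((2*n-1:ℕ):ℤ) = 0 := aa_eq_zero (by omega)
  have h00 : aa n ((0:ℕ):ℤ) = sA n 0 := by
    show aa n 0 = sA n 0
    rw [aa, zpow_zero, one_mul]
  -- lower bound for the sum of squared jumps
  have hsub : ∑ i ∈ Finset.range n, (aa n (2*(i:ℤ)+1) - aa n (2*(i:ℤ)))^2/2
      ≤ ∑ m ∈ Finset.range (2*n-1), (aa n ((m:ℤ)+1) - aa n (m:ℤ))^2/2 := by
    have himg : ∑ i ∈ Finset.range n, (aa n (2*(i:ℤ)+1) - aa n (2*(i:ℤ)))^2/2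
        = ∑ m ∈ (Finset.range n).image (fun i : ℕ => 2*i),
            (aa n ((m:ℤ)+1) - aa n (m:ℤ))^2/2 := by
      rw [Finset.sum_image (by intro a _ b _ h; simp only at h; omega)]
      apply Finset.sum_congr rfl
      intro i _
      push_cast
      ring_nf
    rw [himg]
    apply Finset.sum_le_sum_of_subset_of_nonneg
    · intro m hm
      obtain ⟨i, hi, rfl⟩ := Finset.mem_image.mp hm
      exact Finset.mem_range.mpr (by have := Finset.mem_range.mp hi; omega)
    · intro m _ _
      positivity
  have heach : ∀ i ∈ Finset.range n, (1/18:ℝ) ≤ (aa n (2*(i:ℤ)+1) - aa n (2*(i:ℤ)))^2/2 := by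
    intro i hi
    have hj := jump_le n i (Finset.mem_range.mp hi)
    nlinarith [hj]
  have hcount : (n:ℝ)/18 ≤ ∑ i ∈ Finset.range n, (aa n (2*(i:ℤ)+1) - aa n (2*(i:ℤ)))^2/2 := by
    calc (n:ℝ)/18 = ∑ _i ∈ Finset.range n, (1/18:ℝ) := by
          rw [Finset.sum_const, Finset.card_range, nsmul_eq_mul]; ring
      _ ≤ _ := Finset.sum_le_sum heach
  have hs2 : (0:ℝ) ≤ (sA n 0)^2 := sq_nonneg _
  rw [hsum, hend, h00]
  linarith

lemma abs_Td_ge (n : ℕ) (hn : 1 ≤ n) {x y : ℝ}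
    (hx : x ∈ Set.Ico (0:ℝ) (2^(-(2*(n:ℤ))))) (hy : y ∈ Set.Ico (0:ℝ) (2^(-(2*(n:ℤ))))) :
    (1/18:ℝ) * n ≤ |Td (F14 n) (G14 n) (x, y)| := by
  have h := Td_le n hn hx hy
  have hn' : (0:ℝ) < n := by exact_mod_cast hn
  rw [abs_of_nonpos (by linarith)]
  linarith

lemma measurable_F14 (n : ℕ) : Measurable (F14 n) := by
  have hS : MeasurableSet {p : ℝ × ℝ |
      (∃ j < n, p.1 ∈ Set.Ico ((2:ℝ)^(-(2*(j:ℤ))-1)) ((2:ℝ)^(-(2*(j:ℤ))))) ∧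
        p.2 ∈ Set.Ico (0:ℝ) 1} := by
    have he : {p : ℝ × ℝ |
        (∃ j < n, p.1 ∈ Set.Ico ((2:ℝ)^(-(2*(j:ℤ))-1)) ((2:ℝ)^(-(2*(j:ℤ))))) ∧
          p.2 ∈ Set.Ico (0:ℝ) 1}
        = (⋃ j ∈ Set.Iio n, Set.Ico ((2:ℝ)^(-(2*(j:ℤ))-1)) ((2:ℝ)^(-(2*(j:ℤ)))))
            ×ˢ Set.Ico (0:ℝ) 1 := by
      ext p
      simp only [Set.mem_setOf_eq, Set.mem_prod, Set.mem_iUnion, Set.mem_Iio, exists_prop]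
    rw [he]
    exact (MeasurableSet.biUnion (Set.to_countable _)
      (fun _ _ => measurableSet_Ico)).prod measurableSet_Ico
  exact Measurable.ite hS measurable_const measurable_const

lemma measurable_G14 (n : ℕ) : Measurable (G14 n) :=
  (measurable_F14 n).comp measurable_swap

lemma compactSupport_F14 (n : ℕ) : HasCompactSupport (F14 n) := by
  apply HasCompactSupport.intro (isCompact_Icc.prod isCompact_Icc :
    IsCompact (Set.Icc (0:ℝ) 1 ×ˢ Set.Icc (0:ℝ) 1))
  intro p hp
  rw [F14, if_neg]
  rintro ⟨⟨j, hj, h1⟩, h2⟩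
  refine hp (Set.mem_prod.mpr ⟨⟨le_trans (two_zpow_pos _).le h1.1, ?_⟩, ⟨h2.1, h2.2.le⟩⟩)
  have : (2:ℝ)^(-(2*(j:ℤ))) ≤ 2^(0:ℤ) := two_zpow_le (by omega)
  rw [zpow_zero] at this
  exact le_trans h1.2.le this

lemma compactSupport_G14 (n : ℕ) : HasCompactSupport (G14 n) := by
  apply HasCompactSupport.intro (isCompact_Icc.prod isCompact_Icc :
    IsCompact (Set.Icc (0:ℝ) 1 ×ˢ Set.Icc (0:ℝ) 1))
  intro p hp
  rw [G14, F14, if_neg]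
  rintro ⟨⟨j, hj, h1⟩, h2⟩
  have hle : (2:ℝ)^(-(2*(j:ℤ))) ≤ 2^(0:ℤ) := two_zpow_le (by omega)
  rw [zpow_zero] at hle
  exact hp (Set.mem_prod.mpr ⟨⟨h2.1, h2.2.le⟩,
    ⟨le_trans (two_zpow_pos _).le h1.1, le_trans h1.2.le hle⟩⟩)

lemma bound_F14 (n : ℕ) : ∀ p, |F14 n p| ≤ 1 := by
  intro p
  rw [F14]
  split <;> norm_num

lemma bound_G14 (n : ℕ) : ∀ p, |G14 n p| ≤ 1 := fun _ => bound_F14 n _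

/-- **`T_d` does not map `L^∞ × L^∞` to `L^∞`:** there is no constant `C` with
`‖T_d(F,G)‖_∞ ≤ C ‖F‖_∞ ‖G‖_∞` for all bounded compactly supported measurable `F, G`.
Specifically, for the indicator functions `F14 n` and `G14 n` one has
`|T_d(F,G)| ≳ n` on the square `[0, 2^{-2n})²` while `‖F‖_∞ = ‖G‖_∞ = 1`. -/
theorem Td_not_bounded_Linfty :
    (¬ ∃ C : ℝ, ∀ F G : ℝ × ℝ → ℝ, Measurable F → Measurable G →
      HasCompactSupport F → HasCompactSupport G →
      (∃ M : ℝ, ∀ p, |F p| ≤ M) → (∃ M : ℝ, ∀ p, |G p| ≤ M) →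
      MeasureTheory.eLpNorm (Td F G) ⊤ MeasureTheory.volume ≤
        ENNReal.ofReal C * MeasureTheory.eLpNorm F ⊤ MeasureTheory.volume *
          MeasureTheory.eLpNorm G ⊤ MeasureTheory.volume) ∧
    (∃ c : ℝ, 0 < c ∧ ∀ n : ℕ, 1 ≤ n →
      ∀ p : ℝ × ℝ,
        p ∈ Set.Ico (0:ℝ) ((2:ℝ)^(-(2*(n:ℤ)))) ×ˢ Set.Ico (0:ℝ) ((2:ℝ)^(-(2*(n:ℤ)))) →
        c * n ≤ |Td (F14 n) (G14 n) p|) := by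
  have key : ∀ n : ℕ, 1 ≤ n → ∀ p : ℝ × ℝ,
      p ∈ Set.Ico (0:ℝ) ((2:ℝ)^(-(2*(n:ℤ)))) ×ˢ Set.Ico (0:ℝ) ((2:ℝ)^(-(2*(n:ℤ)))) →
      (1/18:ℝ) * n ≤ |Td (F14 n) (G14 n) p| := by
    intro n hn p hp
    exact abs_Td_ge n hn hp.1 hp.2
  refine ⟨?_, ⟨1/18, by norm_num, key⟩⟩
  rintro ⟨C, hC⟩
  obtain ⟨n0, hn0⟩ := exists_nat_gt (C * 18)
  set n := n0 + 1 with hn_def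
  have hn : 1 ≤ n := Nat.le_add_left 1 n0
  have hCn : C < (1/18:ℝ) * n := by
    have h1 : (n0:ℝ) < (n:ℝ) := by exact_mod_cast Nat.lt_succ_self n0
    linarith
  have hF := hC (F14 n) (G14 n) (measurable_F14 n) (measurable_G14 n)
    (compactSupport_F14 n) (compactSupport_G14 n) ⟨1, bound_F14 n⟩ ⟨1, bound_G14 n⟩
  set q := (2:ℝ)^(-(2*(n:ℤ))) with hq_def
  have hq : 0 < q := two_zpow_pos _
  have hvol : MeasureTheory.volume (Set.Ico (0:ℝ) q ×ˢ Set.Ico (0:ℝ) q) ≠ 0 := by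
    rw [MeasureTheory.Measure.volume_eq_prod, MeasureTheory.Measure.prod_prod,
      Real.volume_Ico]
    exact mul_ne_zero (by simp [ENNReal.ofReal_eq_zero, not_le, hq])
      (by simp [ENNReal.ofReal_eq_zero, not_le, hq])
  obtain ⟨p, hp, hple⟩ := MeasureTheory.Measure.exists_mem_of_measure_ne_zero_of_ae hvol
    (MeasureTheory.ae_restrict_of_ae
      (MeasureTheory.ae_le_eLpNormEssSup (f := Td (F14 n) (G14 n)) (μ := MeasureTheory.volume)))
  have h1 : ENNReal.ofReal ((1/18:ℝ)*n) ≤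
      MeasureTheory.eLpNorm (Td (F14 n) (G14 n)) ⊤ MeasureTheory.volume := by
    rw [MeasureTheory.eLpNorm_exponent_top]
    refine le_trans ?_ hple
    rw [← ofReal_norm]
    exact ENNReal.ofReal_le_ofReal (by rw [Real.norm_eq_abs]; exact key n hn p hp)
  have h2 : MeasureTheory.eLpNorm (F14 n) ⊤ MeasureTheory.volume ≤ 1 := by
    rw [MeasureTheory.eLpNorm_exponent_top]
    have := MeasureTheory.eLpNormEssSup_le_of_ae_bound (μ := MeasureTheory.volume) (C := 1)
      (Filter.Eventually.of_forall (fun p => by rw [Real.norm_eq_abs]; exact bound_F14 n p))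
    simpa using this
  have h3 : MeasureTheory.eLpNorm (G14 n) ⊤ MeasureTheory.volume ≤ 1 := by
    rw [MeasureTheory.eLpNorm_exponent_top]
    have := MeasureTheory.eLpNormEssSup_le_of_ae_bound (μ := MeasureTheory.volume) (C := 1)
      (Filter.Eventually.of_forall (fun p => by rw [Real.norm_eq_abs]; exact bound_G14 n p))
    simpa using this
  have h4 : MeasureTheory.eLpNorm (Td (F14 n) (G14 n)) ⊤ MeasureTheory.volume
      ≤ ENNReal.ofReal C := by
    refine le_trans hF ?_
    calc ENNReal.ofReal C * MeasureTheory.eLpNorm (F14 n) ⊤ MeasureTheory.volume *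
          MeasureTheory.eLpNorm (G14 n) ⊤ MeasureTheory.volume
        ≤ ENNReal.ofReal C * 1 * 1 := by gcongr
      _ = ENNReal.ofReal C := by simp
  have h5 : ENNReal.ofReal ((1/18:ℝ)*n) ≤ ENNReal.ofReal C := le_trans h1 h4
  have hposn : (0:ℝ) < (1/18:ℝ)*n := by
    have : (1:ℝ) ≤ (n:ℝ) := by exact_mod_cast hn
    linarith
  rcases le_or_gt C 0 with hC0 | hC0
  · rw [ENNReal.ofReal_eq_zero.mpr hC0, le_zero_iff, ENNReal.ofReal_eq_zero] at h5
    linarith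
  · have := (ENNReal.ofReal_le_ofReal_iff hC0.le).mp h5
    linarith
end
end

section
/- Key computation in the counterexample: with F and G as defined, (E_k^{(1)} F)(x,y) = R_{k+1}(y) for all x ∈ [0, 2^{-n}) and k = 0, 1, …, n−1, and (Δ_k^{(2)} G)(x,y) = 1_{[0,2^{-n})}(x) R_{k+1}(y) for k = 0, 1, …, n−1; since R_{k+1}(y)^2 = 1 on [0,1), it follows that T_d(F,G) = n · 1_{[0,2^{-n}) × [0,1)}. -/
open MeasureTheory Set
open scoped Classical

noncomputable section

/-- The `k`-th Rademacher function on `[0,1)`: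
`R_k = Σ_{J ⊆ [0,1), |J| = 2^{-k+1}} (1_{J_left} − 1_{J_right})`, extended by `0`. -/
def Rademacher (k : ℕ) (y : ℝ) : ℝ :=
  if y ∈ Set.Ico (0:ℝ) 1 then (if ⌊(2:ℝ)^k * y⌋ % 2 = 0 then 1 else -1) else 0

/-- The counterexample function `G(x,y) = 1_{[0,2^{-n})}(x) Σ_{k=0}^{n-1} R_{k+1}(y)`. -/
def Gex (n : ℕ) (p : ℝ × ℝ) : ℝ :=
  (if p.1 ∈ Set.Ico (0:ℝ) ((2:ℝ)^(-(n:ℤ))) then 1 else 0) *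
    ∑ k ∈ Finset.range n, Rademacher (k+1) p.2

/-- The counterexample function `F`, supported in `[0,1)²`, with
`F(x,y) = 2R_j(y) − R_{j+1}(y)` for `x ∈ [2^{-j}, 2^{-j+1})`, `j = 1,…,n−1`, and
`F(x,y) = R_n(y)` for `x ∈ [0, 2^{-n+1})`. -/
def Fex (n : ℕ) (p : ℝ × ℝ) : ℝ :=
  if p.1 ∈ Set.Ico (0:ℝ) ((2:ℝ)^(1-(n:ℤ))) then Rademacher n p.2
  else if p.1 ∈ Set.Ico ((2:ℝ)^(1-(n:ℤ))) (1:ℝ) then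
    2 * Rademacher ((-(Int.log 2 p.1)).toNat) p.2 -
      Rademacher ((-(Int.log 2 p.1)).toNat + 1) p.2
  else 0


lemma measurableSet_dIco (k l : ℤ) : MeasurableSet (dIco k l) := measurableSet_Ico

lemma volume_dIco (k l : ℤ) : volume (dIco k l) = ENNReal.ofReal ((2:ℝ)^k) := by
  rw [dIco, Real.volume_Ico]; ring_nf

lemma zpow_cancel (k : ℤ) (x : ℝ) : (2:ℝ)^(-k) * ((2:ℝ)^k * x) = x := by
  rw [← mul_assoc, ← zpow_add₀ (two_ne_zero : (2:ℝ) ≠ 0), neg_add_cancel, zpow_zero, one_mul]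

lemma mem_dIco_self (k : ℤ) (x : ℝ) : x ∈ dIco (-k) ⌊(2:ℝ)^k * x⌋ := by
  constructor
  · calc ((2:ℝ)^(-k) * ⌊(2:ℝ)^k * x⌋ : ℝ) ≤ (2:ℝ)^(-k) * ((2:ℝ)^k * x) := by
          gcongr
          exact Int.floor_le _
      _ = x := zpow_cancel k x
  · have h := Int.lt_floor_add_one ((2:ℝ)^k * x)
    calc x = (2:ℝ)^(-k) * ((2:ℝ)^k * x) := (zpow_cancel k x).symm
      _ < (2:ℝ)^(-k) * (⌊(2:ℝ)^k * x⌋ + 1) := by gcongr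

lemma setIntegral_dIco_const {f : ℝ → ℝ} {c : ℝ} (k l : ℤ)
    (h : ∀ t ∈ dIco k l, f t = c) : ∫ t in dIco k l, f t = (2:ℝ)^k * c := by
  rw [setIntegral_congr_fun (measurableSet_dIco k l) h, setIntegral_const,
    measureReal_def, volume_dIco, ENNReal.toReal_ofReal (by positivity), smul_eq_mul]

lemma integrableOn_dIco_const {f : ℝ → ℝ} {c : ℝ} (k l : ℤ)
    (h : ∀ t ∈ dIco k l, f t = c) : IntegrableOn f (dIco k l) := by
  have : IntegrableOn (fun _ => c) (dIco k l) := integrableOn_const (by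
    rw [volume_dIco]; exact ENNReal.ofReal_lt_top.ne)
  exact this.congr_fun (fun t ht => (h t ht).symm) (measurableSet_dIco k l)

lemma dIco_split (j l : ℤ) : dIco j l = dIco (j-1) (2*l) ∪ dIco (j-1) (2*l+1) := by
  have h2 : (2:ℝ)^(j-1) = 2^j / 2 := by
    rw [zpow_sub₀ (two_ne_zero : (2:ℝ) ≠ 0), zpow_one]
  have hpos : (0:ℝ) < 2^j := by positivity
  unfold dIco
  push_cast
  rw [h2]
  have e1 : (2:ℝ)^j / 2 * (2*l) = 2^j * l := by ring
  have e2 : (2:ℝ)^j / 2 * (2*l+1) = 2^j * l + 2^j/2 := by ring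
  have e3 : (2:ℝ)^j / 2 * (2*l+1+1) = 2^j * (l+1) := by ring
  rw [e1, e2, e3, Ico_union_Ico_eq_Ico] <;> nlinarith

lemma dIco_disj (j l : ℤ) : Disjoint (dIco (j-1) (2*l)) (dIco (j-1) (2*l+1)) := by
  unfold dIco
  rw [Set.Ico_disjoint_Ico]
  push_cast
  have hpos : (0:ℝ) < (2:ℝ)^(j-1) := by positivity
  rw [min_le_iff]; left
  rw [le_max_iff]; right
  exact le_refl _

lemma integral_dIco_split {f : ℝ → ℝ} (j l : ℤ)
    (h1 : IntegrableOn f (dIco (j-1) (2*l))) (h2 : IntegrableOn f (dIco (j-1) (2*l+1))) :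
    ∫ t in dIco j l, f t = (∫ t in dIco (j-1) (2*l), f t) + ∫ t in dIco (j-1) (2*l+1), f t := by
  rw [dIco_split j l, setIntegral_union (dIco_disj j l) (measurableSet_dIco _ _) h1 h2]
lemma floor_eq_of_mem_scaled {j : ℤ} (hj : j ≤ 0) (l : ℤ) {u : ℝ}
    (hu : u ∈ Set.Ico ((2:ℝ)^j * l) ((2:ℝ)^j * (l+1))) : ⌊u⌋ = ⌊(2:ℝ)^j * l⌋ := by
  obtain ⟨h1, h2⟩ := hu
  refine le_antisymm ?_ (Int.floor_le_floor h1)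
  by_contra h
  push_neg at h
  have hz1 : (2:ℝ)^j * l < (⌊u⌋ : ℝ) := by
    calc (2:ℝ)^j * l < (⌊(2:ℝ)^j * l⌋ : ℝ) + 1 := Int.lt_floor_add_one _
      _ ≤ (⌊u⌋ : ℝ) := by exact_mod_cast h
  have hz2 : (⌊u⌋ : ℝ) < (2:ℝ)^j * (l+1) := lt_of_le_of_lt (Int.floor_le u) h2
  set d : ℕ := (-j).toNat with hd
  have hdj : (-j : ℤ) = d := (Int.toNat_of_nonneg (by omega)).symm
  have hpow : (2:ℝ)^(-j) = ((2^d : ℤ) : ℝ) := by rw [hdj]; push_cast; rw [zpow_natCast]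
  have hA0 := mul_lt_mul_of_pos_left hz1 (by positivity : (0:ℝ) < (2:ℝ)^(-j))
  have hB0 := mul_lt_mul_of_pos_left hz2 (by positivity : (0:ℝ) < (2:ℝ)^(-j))
  rw [zpow_cancel] at hA0 hB0
  rw [hpow] at hA0 hB0
  have hA' : l < 2^d * ⌊u⌋ := by exact_mod_cast hA0
  have hB' : (2:ℤ)^d * ⌊u⌋ < l + 1 := by push_cast at hB0; exact_mod_cast hB0
  omega

lemma zpow_cancel' (k : ℤ) (x : ℝ) : (2:ℝ)^k * ((2:ℝ)^(-k) * x) = x := by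
  have := zpow_cancel (-k) x; rwa [neg_neg] at this

lemma mem_Ico01_iff {k : ℕ} {l : ℤ} {t : ℝ} (ht : t ∈ dIco (-(k:ℤ)) l) :
    t ∈ Set.Ico (0:ℝ) 1 ↔ (0 ≤ l ∧ l < 2^k) := by
  obtain ⟨h1, h2⟩ := ht
  have hpos : (0:ℝ) < (2:ℝ)^(-(k:ℤ)) := by positivity
  have hpowk : ((2^k : ℤ) : ℝ) = (2:ℝ)^(k:ℤ) := by push_cast; rw [zpow_natCast]
  constructor
  · rintro ⟨ha, hb⟩
    constructor
    · by_contra hl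
      push_neg at hl
      have hl1 : (l:ℝ) + 1 ≤ 0 := by exact_mod_cast (by omega : l + 1 ≤ 0)
      nlinarith
    · have ht1 : (2:ℝ)^(-(k:ℤ)) * l < 1 := lt_of_le_of_lt h1 hb
      have := mul_lt_mul_of_pos_left ht1 (by positivity : (0:ℝ) < (2:ℝ)^((k:ℤ)))
      rw [zpow_cancel', mul_one] at this
      rw [← hpowk] at this
      exact_mod_cast this
  · rintro ⟨ha, hb⟩
    have ha' : (0:ℝ) ≤ (l:ℝ) := by exact_mod_cast ha
    have hb' : (l:ℝ) + 1 ≤ (2:ℝ)^(k:ℤ) := by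
      rw [← hpowk]; exact_mod_cast (by omega : l + 1 ≤ 2^k)
    constructor
    · exact le_trans (by positivity) h1
    · calc t < (2:ℝ)^(-(k:ℤ)) * (l+1) := h2
        _ ≤ (2:ℝ)^(-(k:ℤ)) * (2:ℝ)^(k:ℤ) := by gcongr
        _ = 1 := by rw [← zpow_add₀ (two_ne_zero : (2:ℝ)≠0)]; simp
lemma scaled_mem {k l : ℤ} {t : ℝ} (m : ℤ) (ht : t ∈ dIco (-k) l) :
    (2:ℝ)^m * t ∈ Set.Ico ((2:ℝ)^(m-k) * l) ((2:ℝ)^(m-k) * (l+1)) := by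
  obtain ⟨h1, h2⟩ := ht
  have key : ∀ a : ℝ, (2:ℝ)^m * ((2:ℝ)^(-k) * a) = (2:ℝ)^(m-k) * a := by
    intro a
    rw [← mul_assoc, ← zpow_add₀ (two_ne_zero : (2:ℝ)≠0), ← sub_eq_add_neg]
  constructor
  · rw [← key]; gcongr
  · rw [← key]; gcongr

lemma rad_apply {m : ℕ} {l : ℤ} {t : ℝ} (ht : t ∈ dIco (-(m:ℤ)) l) :
    Rademacher m t = if 0 ≤ l ∧ l < 2^m then (if l % 2 = 0 then (1:ℝ) else -1) else 0 := by
  have hfl : ⌊(2:ℝ)^(m:ℤ) * t⌋ = l := by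
    have h := scaled_mem (m:ℤ) ht
    rw [sub_self, zpow_zero, one_mul, one_mul] at h
    rw [Int.floor_eq_iff]
    exact_mod_cast h
  unfold Rademacher
  rw [← zpow_natCast (2:ℝ) m, hfl]
  by_cases hc : 0 ≤ l ∧ l < 2^m
  · rw [if_pos ((mem_Ico01_iff ht).2 hc), if_pos hc]
  · rw [if_neg (fun h => hc ((mem_Ico01_iff ht).1 h)), if_neg hc]

lemma rad_const {m k : ℕ} (hmk : m ≤ k) {l : ℤ} {t y : ℝ}
    (ht : t ∈ dIco (-(k:ℤ)) l) (hy : y ∈ dIco (-(k:ℤ)) l) :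
    Rademacher m t = Rademacher m y := by
  have hj : ((m:ℤ) - k) ≤ 0 := by omega
  have hfl : ⌊(2:ℝ)^(m:ℤ) * t⌋ = ⌊(2:ℝ)^(m:ℤ) * y⌋ := by
    rw [floor_eq_of_mem_scaled hj l (scaled_mem _ ht),
        floor_eq_of_mem_scaled hj l (scaled_mem _ hy)]
  unfold Rademacher
  rw [← zpow_natCast (2:ℝ) m, hfl]
  by_cases h01 : t ∈ Set.Ico (0:ℝ) 1
  · rw [if_pos h01, if_pos ((mem_Ico01_iff hy).2 ((mem_Ico01_iff ht).1 h01))]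
  · rw [if_neg h01, if_neg (fun h => h01 ((mem_Ico01_iff ht).2 ((mem_Ico01_iff hy).1 h)))]
lemma rad_measurable (m : ℕ) : Measurable (Rademacher m) := by
  unfold Rademacher
  have hfl : Measurable (fun y : ℝ => ⌊(2:ℝ)^m * y⌋) :=
    Int.measurable_floor.comp (measurable_const.mul measurable_id)
  have hset : MeasurableSet {y : ℝ | ⌊(2:ℝ)^m * y⌋ % 2 = 0} := by
    have : Measurable (fun y : ℝ => ⌊(2:ℝ)^m * y⌋ % 2) := (measurable_from_top (f := fun z : ℤ => z % 2)).comp hfl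
    exact this (measurableSet_singleton 0)
  exact Measurable.ite measurableSet_Ico
    (Measurable.ite hset measurable_const measurable_const) measurable_const

lemma rad_integrable (m : ℕ) : Integrable (Rademacher m) := by
  have hg : Integrable (Set.indicator (Set.Ico (0:ℝ) 1) (fun _ => (1:ℝ))) := by
    rw [integrable_indicator_iff measurableSet_Ico]
    exact integrableOn_const (by rw [Real.volume_Ico]; exact ENNReal.ofReal_lt_top.ne)
  apply hg.mono' (rad_measurable m).aestronglyMeasurable
  apply Filter.Eventually.of_forall
  intro y
  unfold Rademacher
  by_cases h : y ∈ Set.Ico (0:ℝ) 1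
  · rw [if_pos h, Set.indicator_of_mem h]
    by_cases h2 : ⌊(2:ℝ)^m * y⌋ % 2 = 0 <;> simp [h2]
  · rw [if_neg h, Set.indicator_of_notMem h]; simp

lemma rad_integrableOn (m : ℕ) (s : Set ℝ) : IntegrableOn (Rademacher m) s :=
  (rad_integrable m).integrableOn

-- mean zero over coarse dyadic intervals
lemma rad_integral_zero_aux (d : ℕ) : ∀ (k : ℕ) (m : ℕ) (l : ℤ), k + d + 1 = m →
    ∫ t in dIco (-(k:ℤ)) l, Rademacher m t = 0 := by
  induction d with
  | zero =>
    intro k m l hm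
    have hsplit := integral_dIco_split (f := Rademacher m) (-(k:ℤ)) l
      (rad_integrableOn m _) (rad_integrableOn m _)
    have hk1 : (-(k:ℤ) - 1) = -((k+1:ℕ):ℤ) := by push_cast; ring
    have hval : ∀ l' : ℤ, ∀ t ∈ dIco (-((k+1:ℕ):ℤ)) l', Rademacher m t =
        (if 0 ≤ l' ∧ l' < 2^(k+1) then (if l' % 2 = 0 then (1:ℝ) else -1) else 0) := by
      intro l' t ht
      have : m = k + 1 := by omega
      subst this
      exact rad_apply ht
    rw [hsplit]
    rw [hk1] at *
    rw [setIntegral_dIco_const _ _ (hval (2*l)), setIntegral_dIco_const _ _ (hval (2*l+1))]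
    have hpow : (2:ℤ)^(k+1) = 2 * 2^k := by ring
    by_cases hc : 0 ≤ 2*l ∧ 2*l < (2:ℤ)^(k+1)
    · have hc' : 0 ≤ 2*l+1 ∧ 2*l+1 < (2:ℤ)^(k+1) := by omega
      rw [if_pos hc, if_pos hc', if_pos (by omega), if_neg (by omega)]
      ring
    · have hc' : ¬(0 ≤ 2*l+1 ∧ 2*l+1 < (2:ℤ)^(k+1)) := by omega
      rw [if_neg hc, if_neg hc']
      ring
  | succ d ih =>
    intro k m l hm
    have hsplit := integral_dIco_split (f := Rademacher m) (-(k:ℤ)) l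
      (rad_integrableOn m _) (rad_integrableOn m _)
    have hk1 : (-(k:ℤ) - 1) = -((k+1:ℕ):ℤ) := by push_cast; ring
    rw [hsplit, hk1, ih (k+1) m (2*l) (by omega), ih (k+1) m (2*l+1) (by omega), add_zero]

lemma rad_integral_zero {k m : ℕ} (hkm : k < m) (l : ℤ) :
    ∫ t in dIco (-(k:ℤ)) l, Rademacher m t = 0 :=
  rad_integral_zero_aux (m - k - 1) k m l (by omega)
def Srad (n : ℕ) (y : ℝ) : ℝ := ∑ m ∈ Finset.range n, Rademacher (m+1) y

lemma rad_zero {m : ℕ} {t : ℝ} (ht : t ∉ Set.Ico (0:ℝ) 1) : Rademacher m t = 0 := by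
  unfold Rademacher; rw [if_neg ht]

lemma Srad_zero {n : ℕ} {t : ℝ} (ht : t ∉ Set.Ico (0:ℝ) 1) : Srad n t = 0 := by
  unfold Srad
  exact Finset.sum_eq_zero (fun m _ => rad_zero ht)

lemma Ek_rad {m k : ℕ} (hmk : m ≤ k) (y : ℝ) :
    Ek (k:ℤ) (Rademacher m) y = Rademacher m y := by
  unfold Ek
  rw [setIntegral_dIco_const (-(k:ℤ)) _ (fun t ht => rad_const hmk ht (mem_dIco_self (k:ℤ) y)),
    zpow_cancel']

lemma Ek_rad_zero {k m : ℕ} (hkm : k < m) (y : ℝ) :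
    Ek (k:ℤ) (Rademacher m) y = 0 := by
  unfold Ek
  rw [rad_integral_zero hkm, mul_zero]

lemma Ek_Srad (k n : ℕ) (y : ℝ) :
    Ek (k:ℤ) (Srad n) y = ∑ m ∈ Finset.range (min k n), Rademacher (m+1) y := by
  have hint : ∫ t in dIco (-(k:ℤ)) ⌊(2:ℝ)^(k:ℤ) * y⌋, Srad n t
      = ∑ m ∈ Finset.range n, ∫ t in dIco (-(k:ℤ)) ⌊(2:ℝ)^(k:ℤ) * y⌋, Rademacher (m+1) t := by
    exact integral_finset_sum _ (fun m _ => rad_integrableOn (m+1) _)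
  unfold Ek
  rw [hint, Finset.mul_sum]
  have : ∀ m ∈ Finset.range n,
      (2:ℝ)^(k:ℤ) * ∫ t in dIco (-(k:ℤ)) ⌊(2:ℝ)^(k:ℤ) * y⌋, Rademacher (m+1) t
      = if m < k then Rademacher (m+1) y else 0 := by
    intro m _
    by_cases hm : m < k
    · rw [if_pos hm]
      exact Ek_rad (by omega) y
    · rw [if_neg hm]
      exact Ek_rad_zero (by omega) y
  rw [Finset.sum_congr rfl this, Finset.sum_ite, Finset.sum_const_zero, add_zero]
  apply Finset.sum_congr _ (fun _ _ => rfl)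
  ext x; simp; omega

lemma rad_integral_zero_nonneg (d : ℕ) {m : ℕ} (hm : 1 ≤ m) :
    ∫ t in dIco (d:ℤ) 0, Rademacher m t = 0 := by
  induction d with
  | zero =>
    have := rad_integral_zero (k := 0) (m := m) hm 0
    simpa using this
  | succ d ih =>
    have hcast : ((d+1:ℕ):ℤ) - 1 = (d:ℤ) := by push_cast; ring
    have h2 : ∀ t ∈ dIco (d:ℤ) 1, Rademacher m t = 0 := by
      intro t ht
      apply rad_zero
      intro hmem
      have h1 : (2:ℝ)^(d:ℤ) * 1 ≤ t := by
        have := ht.1; norm_num at this ⊢; exact this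
      have : (1:ℝ) ≤ t := le_trans (by
        rw [mul_one]
        exact one_le_zpow₀ (by norm_num) (by positivity)) h1
      exact absurd hmem.2 (by linarith)
    have hsplit := integral_dIco_split (f := Rademacher m) ((d+1:ℕ):ℤ) 0
      (rad_integrableOn m _) (rad_integrableOn m _)
    rw [hsplit, hcast]
    norm_num
    rw [ih, setIntegral_dIco_const _ _ h2, mul_zero, add_zero]

lemma Ek_Srad_nonpos {k : ℤ} (hk : k ≤ 0) (n : ℕ) (y : ℝ) : Ek k (Srad n) y = 0 := by
  unfold Ek
  set l := ⌊(2:ℝ)^k * y⌋ with hl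
  have hpos : (0:ℝ) < (2:ℝ)^(-k) := by positivity
  have hone : (1:ℝ) ≤ (2:ℝ)^(-k) := one_le_zpow₀ (by norm_num) (by omega)
  rcases lt_trichotomy l 0 with hl0 | hl0 | hl0
  · have : ∀ t ∈ dIco (-k) l, Srad n t = 0 := by
      intro t ht
      apply Srad_zero
      intro hmem
      have hlt : t < (2:ℝ)^(-k) * (l+1) := ht.2
      have : ((l:ℝ)+1) ≤ 0 := by exact_mod_cast (by omega : l + 1 ≤ 0)
      nlinarith [hmem.1]
    rw [setIntegral_dIco_const _ _ this, mul_zero, mul_zero]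
  · rw [hl0]
    have hi : ∫ t in dIco (-k) 0, Srad n t = 0 := by
      have hk' : (-k) = ((-k).toNat : ℤ) := by omega
      rw [hk']
      unfold Srad
      rw [integral_finset_sum _ (fun m _ => rad_integrableOn (m+1) _)]
      exact Finset.sum_eq_zero (fun m _ => rad_integral_zero_nonneg _ (by omega))
    rw [hi, mul_zero]
  · have : ∀ t ∈ dIco (-k) l, Srad n t = 0 := by
      intro t ht
      apply Srad_zero
      intro hmem
      have hge : (2:ℝ)^(-k) * l ≤ t := ht.1
      have h1l : (1:ℝ) ≤ (l:ℝ) := by exact_mod_cast hl0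
      nlinarith [hmem.2]
    rw [setIntegral_dIco_const _ _ this, mul_zero, mul_zero]
lemma intlog_eq {j : ℕ} {t : ℝ} (h1 : (2:ℝ)^(-(j:ℤ)) ≤ t) (h2 : t < (2:ℝ)^(1-(j:ℤ))) :
    Int.log 2 t = -(j:ℤ) := by
  have hc : ((2:ℕ):ℝ) = (2:ℝ) := by norm_num
  have ht : (0:ℝ) < t := lt_of_lt_of_le (by positivity) h1
  have hA : -(j:ℤ) ≤ Int.log 2 t := by
    rw [← Int.zpow_le_iff_le_log (by norm_num) ht, hc]; exact h1
  have hB : Int.log 2 t < 1 - (j:ℤ) := by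
    rw [← Int.lt_zpow_iff_log_lt (by norm_num) ht, hc]; exact h2
  omega

lemma EkFex_aux (n : ℕ) (hn : 1 ≤ n) (y : ℝ) : ∀ d k : ℕ, k + d = n - 1 →
    IntegrableOn (fun t => Fex n (t, y)) (dIco (-(k:ℤ)) 0) ∧
    (2:ℝ)^(k:ℤ) * (∫ t in dIco (-(k:ℤ)) 0, Fex n (t, y)) = Rademacher (k+1) y := by
  intro d
  induction d with
  | zero =>
    intro k hk
    have hcast : -(k:ℤ) = 1 - (n:ℤ) := by omega
    have hconst : ∀ t ∈ dIco (-(k:ℤ)) 0, Fex n (t, y) = Rademacher n y := by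
      intro t ht
      obtain ⟨ht1, ht2⟩ := ht
      norm_num at ht1
      rw [hcast] at ht2
      norm_num at ht2
      unfold Fex
      rw [if_pos (Set.mem_Ico.2 ⟨ht1, ht2⟩)]
    refine ⟨integrableOn_dIco_const _ _ hconst, ?_⟩
    rw [setIntegral_dIco_const _ _ hconst, zpow_cancel']
    congr 1
    omega
  | succ d ih =>
    intro k hk
    obtain ⟨ihInt, ihk⟩ := ih (k+1) (by omega)
    have he : (-(k:ℤ)-1) = -((k+1:ℕ):ℤ) := by push_cast; ring
    have hconst : ∀ t ∈ dIco (-(k:ℤ)-1) 1, Fex n (t, y)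
        = 2 * Rademacher (k+1) y - Rademacher (k+2) y := by
      intro t ht
      obtain ⟨ht0, ht2⟩ := ht
      have ht1 : (2:ℝ)^(-((k+1:ℕ):ℤ)) ≤ t := by rw [← he]; simpa using ht0
      have ht2' : t < (2:ℝ)^(1 - ((k+1:ℕ):ℤ)) := by
        have hq : (2:ℝ)^(1 - ((k+1:ℕ):ℤ)) = (2:ℝ)^(-(k:ℤ)-1) * (((1:ℤ):ℝ)+1) := by
          rw [show (1-((k+1:ℕ):ℤ)) = (-(k:ℤ)-1)+1 by push_cast; ring,
            zpow_add₀ (two_ne_zero : (2:ℝ)≠0), zpow_one]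
          norm_num
        rw [hq]; exact ht2
      have hg : (2:ℝ)^(1-(n:ℤ)) ≤ t := by
        refine le_trans ?_ ht1
        apply zpow_le_zpow_right₀ (by norm_num)
        omega
      have hlt1 : t < 1 := by
        refine lt_of_lt_of_le ht2' ?_
        calc (2:ℝ)^(1-((k+1:ℕ):ℤ)) ≤ (2:ℝ)^(0:ℤ) := by
              apply zpow_le_zpow_right₀ (by norm_num); push_cast; omega
          _ = 1 := zpow_zero 2
      have hnot : t ∉ Set.Ico (0:ℝ) ((2:ℝ)^(1-(n:ℤ))) := by
        intro hmem
        exact absurd hmem.2 (not_lt.2 hg)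
      have hlog : Int.log 2 t = -((k+1:ℕ):ℤ) := intlog_eq ht1 ht2'
      unfold Fex
      rw [if_neg hnot, if_pos (Set.mem_Ico.2 ⟨hg, hlt1⟩), hlog]
      norm_num
    have hIntL : IntegrableOn (fun t => Fex n (t, y)) (dIco (-(k:ℤ)-1) (2*0)) := by
      have : (2*0 : ℤ) = 0 := by ring
      rw [this, he]; exact ihInt
    have hIntR : IntegrableOn (fun t => Fex n (t, y)) (dIco (-(k:ℤ)-1) (2*0+1)) := by
      have : (2*0+1 : ℤ) = 1 := by ring
      rw [this]; exact integrableOn_dIco_const _ _ hconst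
    constructor
    · rw [dIco_split (-(k:ℤ)) 0]
      exact hIntL.union hIntR
    · rw [integral_dIco_split (-(k:ℤ)) 0 hIntL hIntR]
      have e0 : (2*0 : ℤ) = 0 := by ring
      have e1 : (2*0+1 : ℤ) = 1 := by ring
      rw [e1, e0]
      rw [setIntegral_dIco_const _ _ hconst]
      have hL : ∫ t in dIco (-(k:ℤ)-1) 0, Fex n (t, y)
          = (2:ℝ)^(-((k+1:ℕ):ℤ)) * Rademacher (k+2) y := by
        rw [he]
        have := ihk
        have hrw : Rademacher (k+1+1) y = Rademacher (k+2) y := by norm_num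
        rw [hrw] at this
        rw [← this, ← mul_assoc, ← zpow_add₀ (two_ne_zero : (2:ℝ)≠0)]
        rw [show (-((k+1:ℕ):ℤ) + ((k+1:ℕ):ℤ)) = 0 by ring, zpow_zero, one_mul]
      rw [hL]
      have hpow : (2:ℝ)^(k:ℤ) * (2:ℝ)^(-((k+1:ℕ):ℤ)) = 1/2 := by
        rw [← zpow_add₀ (two_ne_zero : (2:ℝ)≠0)]
        rw [show ((k:ℤ) + -((k+1:ℕ):ℤ)) = -1 by push_cast; ring]
        norm_num
      rw [mul_add, ← mul_assoc, hpow, he, ← mul_assoc, hpow]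
      have hrw : Rademacher (k+1+1) y = Rademacher (k+2) y := by norm_num
      ring
lemma rad_sq {m : ℕ} {y : ℝ} (hy : y ∈ Set.Ico (0:ℝ) 1) :
    Rademacher m y * Rademacher m y = 1 := by
  unfold Rademacher
  rw [if_pos hy]
  by_cases h : ⌊(2:ℝ)^m * y⌋ % 2 = 0 <;> simp [h]

lemma Ek_const_mul (k : ℤ) (c : ℝ) (f : ℝ → ℝ) (y : ℝ) :
    Ek k (fun v => c * f v) y = c * Ek k f y := by
  unfold Ek
  rw [integral_const_mul]
  ring

lemma Dk_Srad (n : ℕ) (k : ℤ) (y : ℝ) :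
    Ek (k+1) (Srad n) y - Ek k (Srad n) y
      = if 0 ≤ k ∧ k < n then Rademacher (k.toNat+1) y else 0 := by
  rcases le_or_gt k (-1) with hk | hk
  · rw [Ek_Srad_nonpos (by omega) n y, Ek_Srad_nonpos (by omega) n y,
      if_neg (by omega), sub_zero]
  · have hk0 : 0 ≤ k := by omega
    set m : ℕ := k.toNat with hm
    have hkm : k = (m:ℤ) := by omega
    have hk1 : k + 1 = ((m+1:ℕ):ℤ) := by omega
    rw [hk1, hkm, Ek_Srad (m+1) n y, Ek_Srad m n y]
    by_cases hmn : m < n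
    · rw [if_pos (by constructor <;> omega)]
      rw [min_eq_left (by omega), min_eq_left (by omega), Finset.sum_range_succ]
      ring
    · rw [if_neg (by omega)]
      rw [min_eq_right (by omega), min_eq_right (by omega)]
      ring

lemma Dk2_Gex (n : ℕ) (k : ℤ) (x y : ℝ) :
    Dk2 k (Gex n) (x, y) = (if x ∈ Set.Ico (0:ℝ) ((2:ℝ)^(-(n:ℤ))) then (1:ℝ) else 0) *
      (if 0 ≤ k ∧ k < n then Rademacher (k.toNat+1) y else 0) := by
  set c : ℝ := if x ∈ Set.Ico (0:ℝ) ((2:ℝ)^(-(n:ℤ))) then (1:ℝ) else 0 with hc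
  have hG : (fun v => Gex n (x, v)) = (fun v => c * Srad n v) := funext (fun v => rfl)
  have hE : ∀ j : ℤ, Ek2 j (Gex n) (x, y) = c * Ek j (Srad n) y := by
    intro j
    show Ek j (fun v => Gex n (x, v)) y = _
    rw [hG, Ek_const_mul]
  show Ek2 (k+1) (Gex n) (x,y) - Ek2 k (Gex n) (x,y) = _
  rw [hE, hE, ← mul_sub, Dk_Srad]
lemma Ek1_Fex (n : ℕ) (hn : 1 ≤ n) {x : ℝ} (hx : x ∈ Set.Ico (0:ℝ) ((2:ℝ)^(-(n:ℤ))))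
    (y : ℝ) {k : ℕ} (hk : k < n) : Ek1 (k:ℤ) (Fex n) (x, y) = Rademacher (k+1) y := by
  have hfl : ⌊(2:ℝ)^(k:ℤ) * x⌋ = 0 := by
    rw [Int.floor_eq_zero_iff]
    constructor
    · exact mul_nonneg (by positivity) hx.1
    · calc (2:ℝ)^(k:ℤ) * x < (2:ℝ)^(k:ℤ) * (2:ℝ)^(-(n:ℤ)) := by
            gcongr
            exact hx.2
        _ = (2:ℝ)^((k:ℤ)-(n:ℤ)) := by
            rw [← zpow_add₀ (two_ne_zero : (2:ℝ)≠0), sub_eq_add_neg]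
        _ ≤ (2:ℝ)^(0:ℤ) := by
            apply zpow_le_zpow_right₀ (by norm_num); omega
        _ = 1 := zpow_zero 2
  show Ek (k:ℤ) (fun u => Fex n (u, y)) x = _
  unfold Ek
  rw [hfl]
  exact (EkFex_aux n hn y (n-1-k) k (by omega)).2
/-- **Key computation in the counterexample:** with `F = Fex n` and `G = Gex n`,
`(E_k^{(1)}F)(x,y) = R_{k+1}(y)` for `x ∈ [0,2^{-n})` and `k = 0,…,n−1`;
`(Δ_k^{(2)}G)(x,y) = 1_{[0,2^{-n})}(x) R_{k+1}(y)` for `k = 0,…,n−1`; and since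
`R_{k+1}(y)² = 1` on `[0,1)`, `T_d(F,G) = n · 1_{[0,2^{-n}) × [0,1)}`. -/
theorem counterexample_computation (n : ℕ) (hn : 1 ≤ n) :
    (∀ x ∈ Set.Ico (0:ℝ) ((2:ℝ)^(-(n:ℤ))), ∀ y : ℝ, ∀ k : ℕ, k < n →
      Ek1 (k:ℤ) (Fex n) (x, y) = Rademacher (k+1) y) ∧
    (∀ x y : ℝ, ∀ k : ℕ, k < n →
      Dk2 (k:ℤ) (Gex n) (x, y) =
        (if x ∈ Set.Ico (0:ℝ) ((2:ℝ)^(-(n:ℤ))) then 1 else 0) * Rademacher (k+1) y) ∧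
    (∀ p : ℝ × ℝ, Td (Fex n) (Gex n) p =
      n * Set.indicator (Set.Ico (0:ℝ) ((2:ℝ)^(-(n:ℤ))) ×ˢ Set.Ico (0:ℝ) 1)
        (fun _ => (1:ℝ)) p) := by
  constructor
  · intro x hx y k hk
    exact Ek1_Fex n hn hx y hk
  constructor
  · intro x y k hk
    rw [Dk2_Gex n (k:ℤ) x y,
      if_pos (show (0:ℤ) ≤ (k:ℤ) ∧ (k:ℤ) < (n:ℤ) from ⟨by omega, by exact_mod_cast hk⟩),
      Int.toNat_natCast]
  · rintro ⟨x, y⟩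
    show (∑' k : ℤ, Ek1 k (Fex n) (x,y) * Dk2 k (Gex n) (x,y)) = _
    by_cases hx : x ∈ Set.Ico (0:ℝ) ((2:ℝ)^(-(n:ℤ)))
    · by_cases hy : y ∈ Set.Ico (0:ℝ) 1
      · have hterm : ∀ k : ℤ, Ek1 k (Fex n) (x,y) * Dk2 k (Gex n) (x,y)
            = if 0 ≤ k ∧ k < n then (1:ℝ) else 0 := by
          intro k
          rw [Dk2_Gex n k x y, if_pos hx, one_mul]
          by_cases hc : 0 ≤ k ∧ k < (n:ℤ)
          · rw [if_pos hc, if_pos hc]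
            have h1 := Ek1_Fex n hn hx y (k := k.toNat) (by omega)
            rw [show ((k.toNat:ℕ):ℤ) = k by omega] at h1
            rw [h1]
            exact rad_sq hy
          · rw [if_neg hc, mul_zero, if_neg hc]
        rw [tsum_congr hterm,
          tsum_eq_sum (s := Finset.Icc (0:ℤ) ((n:ℤ)-1))
            (by intro k hks; rw [Finset.mem_Icc] at hks; rw [if_neg (by omega)])]
        have hsum : (∑ k ∈ Finset.Icc (0:ℤ) ((n:ℤ)-1), if 0 ≤ k ∧ k < (n:ℤ) then (1:ℝ) else 0)
            = ∑ _k ∈ Finset.Icc (0:ℤ) ((n:ℤ)-1), (1:ℝ) :=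
          Finset.sum_congr rfl (fun k hks => by
            rw [Finset.mem_Icc] at hks; rw [if_pos (by omega)])
        have hcard : ((n:ℤ) - 1 + 1 - 0).toNat = n := by omega
        rw [hsum, Finset.sum_const, Int.card_Icc, hcard, nsmul_eq_mul, mul_one,
          Set.indicator_of_mem (Set.mem_prod.2 ⟨hx, hy⟩), mul_one]
      · have hterm : ∀ k : ℤ, Ek1 k (Fex n) (x,y) * Dk2 k (Gex n) (x,y) = 0 := by
          intro k
          rw [Dk2_Gex n k x y]
          have : (if 0 ≤ k ∧ k < n then Rademacher (k.toNat+1) y else 0) = 0 := by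
            by_cases hc : 0 ≤ k ∧ k < (n:ℤ)
            · rw [if_pos hc]; exact rad_zero hy
            · rw [if_neg hc]
          rw [this, mul_zero, mul_zero]
        rw [tsum_congr hterm, tsum_zero,
          Set.indicator_of_notMem (fun hmem => hy (Set.mem_prod.1 hmem).2), mul_zero]
    · have hterm : ∀ k : ℤ, Ek1 k (Fex n) (x,y) * Dk2 k (Gex n) (x,y) = 0 := by
        intro k
        rw [Dk2_Gex n k x y, if_neg hx, zero_mul, mul_zero]
      rw [tsum_congr hterm, tsum_zero,
        Set.indicator_of_notMem (fun hmem => hx (Set.mem_prod.1 hmem).1), mul_zero]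
end
end
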